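/- arXiv:1911.10922 — 2 statements merged into one kernel-verified Lean document; each statement's English description precedes it below -/
import Mathlib

section
/- For discrete random variables x, z with z = (z_1,...,z_J), the conditional entropy term admits the decomposition: H(z|x) = −E_{p(x)}[ D_KL( p(z|x) ‖ Π_j p(z_j|x) ) + Σ_j D_KL( p(z_j|x) ‖ Q(z_j|x) ) ] − E_{p(z,x)}[ log Q(z|x) ], for any family of conditional pmfs Q(z|x) of the factorized form Q(z|x) = Π_j Q(z_j|x) with Q(z_j|x) > 0 on the support of p(z_j|x). -/
noncomputable section

/-- Marginal pmf of the data variable `x`. -/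
def pX {X : Type*} {J : ℕ} {Z : Fin J → Type*} [Fintype X] [∀ i, Fintype (Z i)]
    (p : X → (∀ i, Z i) → ℝ) (x : X) : ℝ :=
  ∑ z, p x z

/-- Joint pmf of `x` and the single factor `z_j`. -/
def pJ {X : Type*} {J : ℕ} {Z : Fin J → Type*} [Fintype X] [∀ i, Fintype (Z i)]
    [∀ i, DecidableEq (Z i)]
    (p : X → (∀ i, Z i) → ℝ) (j : Fin J) (x : X) (t : Z j) : ℝ :=
  ∑ z : ∀ i, Z i, if z j = t then p x z else 0

/-- Conditional entropy `H(z|x) = −E_{p(z,x)}[log p(z|x)]`. -/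
def condEnt {X : Type*} {J : ℕ} {Z : Fin J → Type*} [Fintype X] [∀ i, Fintype (Z i)]
    (p : X → (∀ i, Z i) → ℝ) : ℝ :=
  -∑ x, ∑ z, p x z * Real.log (p x z / pX p x)

/-- **Variational decomposition of the conditional entropy.**  For any family
of factorized conditional pmfs `Q(z|x) = Π_j Q(z_j|x)` with `Q(z_j|x) > 0` on
the support of `p(z_j|x)`:
`H(z|x) = −E_{p(x)}[ D_KL(p(z|x) ‖ Π_j p(z_j|x)) + Σ_j D_KL(p(z_j|x) ‖ Q(z_j|x)) ]
          − E_{p(z,x)}[log Q(z|x)]`,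
with the KL divergences (and outer expectations) written as expectations of
the corresponding log-ratios under the joint pmf `p`. -/
theorem condEnt_variational_decomposition {X : Type*} {J : ℕ}
    {Z : Fin J → Type*} [Fintype X] [∀ i, Fintype (Z i)] [∀ i, DecidableEq (Z i)]
    (p : X → (∀ i, Z i) → ℝ)
    (hnn : ∀ x z, 0 ≤ p x z) (hsum : ∑ x, ∑ z, p x z = 1)
    (Qf : (j : Fin J) → X → Z j → ℝ)
    (hQsum : ∀ j x, ∑ t, Qf j x t = 1)
    (hQpos : ∀ j x t, 0 < pJ p j x t → 0 < Qf j x t) :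
    condEnt p =
      -(∑ x, ∑ z, p x z *
            Real.log ((p x z / pX p x) / ∏ j, (pJ p j x (z j) / pX p x)))
        - (∑ x, ∑ z, p x z *
            ∑ j, Real.log ((pJ p j x (z j) / pX p x) / Qf j x (z j)))
        - (∑ x, ∑ z, p x z * Real.log (∏ j, Qf j x (z j))) := by
  have key : ∀ x z, p x z * Real.log (p x z / pX p x) =
      p x z * Real.log ((p x z / pX p x) / ∏ j, (pJ p j x (z j) / pX p x))
      + p x z * (∑ j, Real.log ((pJ p j x (z j) / pX p x) / Qf j x (z j)))
      + p x z * Real.log (∏ j, Qf j x (z j)) := by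
    intro x z
    rcases eq_or_lt_of_le (hnn x z) with h | h
    · simp [← h]
    · have hpX : 0 < pX p x :=
        lt_of_lt_of_le h (Finset.single_le_sum (fun w _ => hnn x w) (Finset.mem_univ z))
      have hpJ : ∀ j, 0 < pJ p j x (z j) := by
        intro j
        unfold pJ
        refine lt_of_lt_of_le ?_
          (Finset.single_le_sum (f := fun w => if w j = z j then p x w else 0)
            (fun w _ => by split <;> simp [hnn x w]) (Finset.mem_univ z))
        simpa using h
      have hQ : ∀ j, 0 < Qf j x (z j) := fun j => hQpos j x (z j) (hpJ j)
      set r : Fin J → ℝ := fun j => pJ p j x (z j) / pX p x with hr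
      have hrpos : ∀ j, 0 < r j := fun j => div_pos (hpJ j) hpX
      have h1 : Real.log ((p x z / pX p x) / ∏ j, r j)
          = Real.log (p x z / pX p x) - ∑ j, Real.log (r j) := by
        rw [Real.log_div (ne_of_gt (div_pos h hpX))
          (Finset.prod_ne_zero_iff.2 fun j _ => (hrpos j).ne'),
          Real.log_prod (fun j _ => (hrpos j).ne')]
      have h2 : ∀ j, Real.log (r j / Qf j x (z j))
          = Real.log (r j) - Real.log (Qf j x (z j)) :=
        fun j => Real.log_div (hrpos j).ne' (hQ j).ne'
      have h3 : Real.log (∏ j, Qf j x (z j)) = ∑ j, Real.log (Qf j x (z j)) :=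
        Real.log_prod (fun j _ => (hQ j).ne')
      rw [h1, h3]
      simp only [hr] at h2 ⊢
      simp only [h2, Finset.sum_sub_distrib]
      ring
  unfold condEnt
  simp only [key, Finset.sum_add_distrib]
  ring
end
end

section
/- For discrete random variables x and z = (z_1,...,z_J): if the components of z are conditionally independent given x (q(z|x) = Π_j q(z_j|x) whenever q(x)>0), then I(z; x) − Σ_j I(z_j; x) = −D_KL(q(z) ‖ Π_j q(z_j)) ≤ 0, i.e. the joint mutual information is at most the sum of per-factor mutual informations, with the gap equal to the total correlation of the marginal. -/
open Finset

noncomputable section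

/-- Marginal pmf of the data variable `x` under the joint pmf `q`. -/
def margX {X : Type*} {J : ℕ} {Z : Fin J → Type*} [Fintype X] [∀ i, Fintype (Z i)]
    (q : X → (∀ i, Z i) → ℝ) (x : X) : ℝ :=
  ∑ z, q x z

/-- Joint pmf of `x` and the factors `{z_i}_{i ∈ S}`, evaluated at a full
configuration `z` (it only depends on the coordinates of `z` in `S`). -/
def jointS {X : Type*} {J : ℕ} {Z : Fin J → Type*} [Fintype X] [∀ i, Fintype (Z i)]
    [∀ i, DecidableEq (Z i)]
    (q : X → (∀ i, Z i) → ℝ) (S : Finset (Fin J)) (x : X) (z : ∀ i, Z i) : ℝ :=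
  ∑ z', if ∀ i ∈ S, z' i = z i then q x z' else 0

/-- Marginal pmf of the factors `{z_i}_{i ∈ S}`. -/
def margS {X : Type*} {J : ℕ} {Z : Fin J → Type*} [Fintype X] [∀ i, Fintype (Z i)]
    [∀ i, DecidableEq (Z i)]
    (q : X → (∀ i, Z i) → ℝ) (S : Finset (Fin J)) (z : ∀ i, Z i) : ℝ :=
  ∑ x, jointS q S x z

/-- Mutual information `I({z_i}_{i∈S}; x)`, written as an expectation of the
log-ratio under the joint pmf. -/
def mInfo {X : Type*} {J : ℕ} {Z : Fin J → Type*} [Fintype X] [∀ i, Fintype (Z i)]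
    [∀ i, DecidableEq (Z i)]
    (q : X → (∀ i, Z i) → ℝ) (S : Finset (Fin J)) : ℝ :=
  ∑ x, ∑ z, q x z * Real.log (jointS q S x z / (margX q x * margS q S z))

/-- Conditional mutual information `I(z_j; x | {z_i}_{i∈T})`, written as an
expectation of the log-ratio under the joint pmf. -/
def cInfo {X : Type*} {J : ℕ} {Z : Fin J → Type*} [Fintype X] [∀ i, Fintype (Z i)]
    [∀ i, DecidableEq (Z i)]
    (q : X → (∀ i, Z i) → ℝ) (j : Fin J) (T : Finset (Fin J)) : ℝ :=
  ∑ x, ∑ z, q x z *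
    Real.log ((jointS q (insert j T) x z * margS q T z) /
      (jointS q T x z * margS q (insert j T) z))

section Aux

variable {X : Type*} {J : ℕ} {Z : Fin J → Type*}
    [Fintype X] [∀ i, Fintype (Z i)] [∀ i, DecidableEq (Z i)]
    (q : X → (∀ i, Z i) → ℝ)

lemma jointS_univ' (x : X) (z : ∀ i, Z i) : jointS q Finset.univ x z = q x z := by
  unfold jointS
  rw [Finset.sum_eq_single z]
  · simp
  · intro b _ hb
    rw [if_neg]
    exact fun h => hb (funext fun i => h i (Finset.mem_univ i))
  · simp

lemma q_le_jointS' (hnn : ∀ x z, 0 ≤ q x z) (S : Finset (Fin J)) (x : X) (z : ∀ i, Z i) :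
    q x z ≤ jointS q S x z := by
  have h := Finset.single_le_sum
    (f := fun z' => if ∀ i ∈ S, z' i = z i then q x z' else 0)
    (fun i _ => by split
                   · exact hnn x i
                   · exact le_rfl)
    (Finset.mem_univ z)
  simpa [jointS] using h

lemma jointS_nonneg' (hnn : ∀ x z, 0 ≤ q x z) (S : Finset (Fin J)) (x : X) (z : ∀ i, Z i) :
    0 ≤ jointS q S x z := by
  apply Finset.sum_nonneg
  intro z' _
  split
  · exact hnn x z'
  · exact le_rfl

lemma jointS_le_margS' (hnn : ∀ x z, 0 ≤ q x z) (S : Finset (Fin J)) (x : X) (z : ∀ i, Z i) :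
    jointS q S x z ≤ margS q S z :=
  Finset.single_le_sum (f := fun x' => jointS q S x' z)
    (fun x' _ => jointS_nonneg' q hnn S x' z) (Finset.mem_univ x)

lemma q_le_margX' (hnn : ∀ x z, 0 ≤ q x z) (x : X) (z : ∀ i, Z i) :
    q x z ≤ margX q x :=
  Finset.single_le_sum (f := fun z' => q x z') (fun z' _ => hnn x z') (Finset.mem_univ z)

lemma margS_univ' (z : ∀ i, Z i) : margS q Finset.univ z = ∑ x, q x z := by
  unfold margS
  exact Finset.sum_congr rfl fun x _ => jointS_univ' q x z

lemma sum_r_eq_one' (hnn : ∀ x z, 0 ≤ q x z) (hsum : ∑ x, ∑ z, q x z = 1) :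
    ∑ z : (∀ i, Z i), ∏ j, margS q {j} z = 1 := by
  have key : ∀ (f : ∀ j : Fin J, Z j → ℝ),
      ∑ z : (∀ i, Z i), ∏ j, f j (z j) = ∏ j, ∑ y, f j y := by
    intro f
    rw [Finset.prod_univ_sum, Fintype.piFinset_univ]
  have hm : ∀ (j : Fin J) (z : ∀ i, Z i),
      margS q {j} z = ∑ x, ∑ z', (if z' j = z j then q x z' else 0) := by
    intro j z
    unfold margS jointS
    simp
  have step1 : ∑ z : (∀ i, Z i), ∏ j, margS q {j} z
      = ∏ j, ∑ y, ∑ x, ∑ z', (if z' j = y then q x z' else 0) := by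
    rw [← key (fun j y => ∑ x, ∑ z', (if z' j = y then q x z' else 0))]
    exact Finset.sum_congr rfl fun z _ => Finset.prod_congr rfl fun j _ => hm j z
  rw [step1, Finset.prod_eq_one]
  intro j _
  rw [Finset.sum_comm]
  have : ∀ x : X, ∑ y, ∑ z', (if z' j = y then q x z' else 0) = ∑ z', q x z' := by
    intro x
    rw [Finset.sum_comm]
    refine Finset.sum_congr rfl fun z' _ => ?_
    simp
  rw [Finset.sum_congr rfl fun x _ => this x]
  exact hsum

end Aux

/-- If the components of `z` are conditionally independent given `x`
(`q(z|x) = Π_j q(z_j|x)` whenever `q(x) > 0`), then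
`I(z; x) − Σ_j I(z_j; x) = −D_KL(q(z) ‖ Π_j q(z_j)) ≤ 0`: the joint mutual
information is at most the sum of the per-factor mutual informations, with
gap equal to the total correlation of the marginal `q(z)`. -/
theorem mInfo_gap_eq_neg_TC_of_condIndep {X : Type*} {J : ℕ}
    {Z : Fin J → Type*}
    [Fintype X] [∀ i, Fintype (Z i)] [∀ i, DecidableEq (Z i)]
    (q : X → (∀ i, Z i) → ℝ)
    (hnn : ∀ x z, 0 ≤ q x z) (hsum : ∑ x, ∑ z, q x z = 1)
    (hci : ∀ x, 0 < margX q x →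
        ∀ z, q x z / margX q x = ∏ j, jointS q {j} x z / margX q x) :
    mInfo q Finset.univ - ∑ j, mInfo q {j} =
      -(∑ z : ∀ i, Z i, (∑ x, q x z) *
          Real.log ((∑ x, q x z) / ∏ j, margS q {j} z)) ∧
    mInfo q Finset.univ ≤ ∑ j, mInfo q {j} := by
  set p : (∀ i, Z i) → ℝ := fun z => ∑ x, q x z with hpdef
  set r : (∀ i, Z i) → ℝ := fun z => ∏ j, margS q {j} z with hrdef
  -- termwise key identity
  have hterm : ∀ x z, q x z * Real.log (jointS q Finset.univ x z /
        (margX q x * margS q Finset.univ z))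
      - q x z * ∑ j, Real.log (jointS q {j} x z / (margX q x * margS q {j} z))
      = q x z * (-(Real.log (p z / r z))) := by
    intro x z
    rcases eq_or_lt_of_le (hnn x z) with h0 | hq
    · rw [← h0]; ring
    · have hc : 0 < margX q x := lt_of_lt_of_le hq (q_le_margX' q hnn x z)
      have hb : ∀ j : Fin J, 0 < jointS q {j} x z :=
        fun j => lt_of_lt_of_le hq (q_le_jointS' q hnn {j} x z)
      have hmj : ∀ j : Fin J, 0 < margS q {j} z :=
        fun j => lt_of_lt_of_le (hb j) (jointS_le_margS' q hnn {j} x z)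
      have hpz : 0 < p z := lt_of_lt_of_le hq
        (Finset.single_le_sum (f := fun x' => q x' z) (fun x' _ => hnn x' z)
          (Finset.mem_univ x))
      have hrz : 0 < r z := Finset.prod_pos fun j _ => hmj j
      -- log of q from conditional independence
      have hqformula : q x z = (∏ j, jointS q {j} x z / margX q x) * margX q x := by
        rw [← hci x hc z]
        exact (div_mul_cancel₀ _ hc.ne').symm
      have hlogq : Real.log (q x z)
          = (∑ j, (Real.log (jointS q {j} x z) - Real.log (margX q x)))
            + Real.log (margX q x) := by
        rw [hqformula, Real.log_mul (Finset.prod_pos fun j _ => div_pos (hb j) hc).ne' hc.ne']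
        congr 1
        rw [Real.log_prod]
        · exact Finset.sum_congr rfl fun j _ => Real.log_div (hb j).ne' hc.ne'
        · intro j _
          exact (div_pos (hb j) hc).ne' 
      have hlogr : Real.log (r z) = ∑ j, Real.log (margS q {j} z) := by
        rw [hrdef]
        rw [Real.log_prod]
        intro j _
        exact (hmj j).ne'
      have hju : jointS q Finset.univ x z = q x z := jointS_univ' q x z
      have hmu : margS q Finset.univ z = p z := margS_univ' q z
      rw [hju, hmu]
      congr 1
      rw [Real.log_div hq.ne' (mul_pos hc hpz).ne', Real.log_mul hc.ne' hpz.ne',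
        Real.log_div hpz.ne' hrz.ne', hlogq, hlogr]
      have hB : ∀ j : Fin J, Real.log (jointS q {j} x z / (margX q x * margS q {j} z))
          = Real.log (jointS q {j} x z) - Real.log (margX q x) - Real.log (margS q {j} z) := by
        intro j
        rw [Real.log_div (hb j).ne' (mul_pos hc (hmj j)).ne', Real.log_mul hc.ne' (hmj j).ne']
        ring
      rw [Finset.sum_congr rfl fun j _ => hB j]
      rw [Finset.sum_sub_distrib, Finset.sum_sub_distrib, Finset.sum_sub_distrib]
      ring
  -- rewrite the sum of per-factor informations
  have hswap : ∑ j, mInfo q {j}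
      = ∑ x, ∑ z, q x z * ∑ j, Real.log (jointS q {j} x z / (margX q x * margS q {j} z)) := by
    unfold mInfo
    rw [Finset.sum_comm]
    refine Finset.sum_congr rfl fun x _ => ?_
    rw [Finset.sum_comm]
    refine Finset.sum_congr rfl fun z _ => ?_
    rw [Finset.mul_sum]
  have keyeq : mInfo q Finset.univ - ∑ j, mInfo q {j}
      = -(∑ z : ∀ i, Z i, p z * Real.log (p z / r z)) := by
    rw [hswap]
    unfold mInfo
    rw [← Finset.sum_sub_distrib]
    calc ∑ x, (∑ z, q x z * Real.log (jointS q Finset.univ x z /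
            (margX q x * margS q Finset.univ z))
          - ∑ z, q x z * ∑ j, Real.log (jointS q {j} x z / (margX q x * margS q {j} z)))
        = ∑ x, ∑ z, q x z * (-(Real.log (p z / r z))) := by
          refine Finset.sum_congr rfl fun x _ => ?_
          rw [← Finset.sum_sub_distrib]
          exact Finset.sum_congr rfl fun z _ => hterm x z
      _ = -(∑ z : ∀ i, Z i, p z * Real.log (p z / r z)) := by
          rw [Finset.sum_comm]
          rw [← Finset.sum_neg_distrib]
          refine Finset.sum_congr rfl fun z _ => ?_
          simp only [mul_neg]
          rw [Finset.sum_neg_distrib, neg_inj, ← Finset.sum_mul]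
  have hsump : ∑ z : (∀ i, Z i), p z = 1 := by
    rw [hpdef]; rw [Finset.sum_comm]; exact hsum
  have hsumr : ∑ z : (∀ i, Z i), r z = 1 := sum_r_eq_one' q hnn hsum
  have hkl : 0 ≤ ∑ z : (∀ i, Z i), p z * Real.log (p z / r z) := by
    have hbound : ∀ z : (∀ i, Z i), p z - r z ≤ p z * Real.log (p z / r z) := by
      intro z
      have hpnn : 0 ≤ p z := Finset.sum_nonneg fun x _ => hnn x z
      have hrnn : 0 ≤ r z := Finset.prod_nonneg fun j _ =>
        Finset.sum_nonneg fun x _ => jointS_nonneg' q hnn {j} x z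
      rcases eq_or_lt_of_le hpnn with h0 | hpz
      · rw [← h0]; simpa using hrnn
      · have hrz : 0 < r z := by
          obtain ⟨x, -, hx⟩ := Finset.exists_lt_of_sum_lt (f := fun _ : X => (0:ℝ))
            (g := fun x => q x z) (by simpa using hpz)
          exact Finset.prod_pos fun j _ =>
            lt_of_lt_of_le (lt_of_lt_of_le hx (q_le_jointS' q hnn {j} x z))
              (jointS_le_margS' q hnn {j} x z)
        have hlog : Real.log (r z / p z) ≤ r z / p z - 1 :=
          Real.log_le_sub_one_of_pos (by positivity)
        have h1 : p z * Real.log (r z / p z) ≤ p z * (r z / p z - 1) :=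
          mul_le_mul_of_nonneg_left hlog hpz.le
        have h2 : p z * (r z / p z) = r z := mul_div_cancel₀ _ hpz.ne'
        rw [mul_sub, h2, mul_one] at h1
        have h3 : Real.log (p z / r z) = -Real.log (r z / p z) := by
          rw [← Real.log_inv, inv_div]
        rw [h3]
        nlinarith
    calc (0:ℝ) = ∑ z : (∀ i, Z i), (p z - r z) := by
          rw [Finset.sum_sub_distrib, hsump, hsumr]; ring
      _ ≤ ∑ z : (∀ i, Z i), p z * Real.log (p z / r z) :=
          Finset.sum_le_sum fun z _ => hbound z
  exact ⟨keyeq, by linarith [keyeq, hkl]⟩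
end
end
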